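/- arXiv:2006.02935 — 4 statements merged into one kernel-verified Lean document; each statement's English description precedes it below -/
import Mathlib

section
/- If S : [0,T] → Sym(n) is measurable, takes positive semi-definite values, and satisfies a·I ≤ ∫₀ᵀ S(t) dt ≤ b·I, then the piecewise-constant control S(t) = (a n / T)·eⱼeⱼᵀ on [(j-1)T/n, jT/n) satisfies ∫₀ᵀ S(t) dt = a·I, and the trajectory ω of ω' = -Sω + (ωᵀSω)ω with initial condition ω(0) = e₁ is constant, so the cost J(S, e₁) = ∫₀ᵀ ωᵀSω dt equals a. In particular, the infimum μ(a,b,T,n) of J over all admissible S and initial conditions on the sphere satisfies μ(a,b,T,n) ≤ a. -/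
open Matrix MeasureTheory intervalIntegral

/-- The set of costs `J(S,ω₀) = ∫₀ᵀ ωᵀSω dt` over admissible controls `S` (measurable,
positive semi-definite, with `a•1 ≤ ∫₀ᵀ S ≤ b•1`) and initial conditions `ω₀ ∈ 𝕊ⁿ⁻¹`,
where `ω` solves `ω' = -Sω + (ωᵀSω)ω`, `ω(0) = ω₀`. Its infimum is `μ(a,b,T,n)`. -/
def costSet (a b T : ℝ) (n : ℕ) : Set ℝ :=
  {J | ∃ (S : ℝ → Matrix (Fin n) (Fin n) ℝ) (ω : ℝ → Fin n → ℝ),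
    (∀ i j, Measurable fun t => S t i j) ∧
    (∀ t ∈ Set.Icc (0:ℝ) T, (S t).PosSemidef) ∧
    ((Matrix.of fun i j => ∫ t in (0:ℝ)..T, S t i j)
        - a • (1 : Matrix (Fin n) (Fin n) ℝ)).PosSemidef ∧
    (b • (1 : Matrix (Fin n) (Fin n) ℝ)
        - Matrix.of fun i j => ∫ t in (0:ℝ)..T, S t i j).PosSemidef ∧
    (∑ i, ω 0 i ^ 2 = 1) ∧
    (∀ t ∈ Set.Ico (0:ℝ) T,
      HasDerivAt ω (-(S t).mulVec (ω t) + (ω t ⬝ᵥ (S t).mulVec (ω t)) • ω t) t) ∧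
    J = ∫ t in (0:ℝ)..T, ω t ⬝ᵥ (S t).mulVec (ω t)}

private lemma floor_piece {T : ℝ} (hT : 0 < T) {n : ℕ} (hn' : (0:ℝ) < n) {t : ℝ}
    (ht0 : 0 ≤ t) (j : ℕ) :
    t ∈ Set.Ico ((j:ℝ) * T / n) (((j:ℝ) + 1) * T / n) ↔ ⌊t * n / T⌋₊ = j := by
  have h0 : 0 ≤ t * n / T := by positivity
  rw [Nat.floor_eq_iff h0, Set.mem_Ico, div_le_iff₀ hn', le_div_iff₀ hT, lt_div_iff₀ hn',
    div_lt_iff₀ hT]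

private lemma ae_ne_real (u : ℝ) : ∀ᵐ t : ℝ, t ≠ u := by
  rw [ae_iff]
  simp only [ne_eq, not_not, Set.setOf_eq_eq_singleton]
  exact measure_singleton u

/-- The piecewise constant control `S(t) = (a n / T)·eⱼeⱼᵀ` on `[(j-1)T/n, jT/n)`
satisfies `∫₀ᵀ S = a•1`; the trajectory of `ω' = -Sω + (ωᵀSω)ω` starting at `e₁` is
constant, with cost `J(S,e₁) = a`. In particular `μ(a,b,T,n) ≤ a`. -/
theorem mu_le_a (n : ℕ) (hn : 1 ≤ n) (a b T : ℝ) (ha : 0 < a) (hab : a ≤ b)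
    (hT : 0 < T)
    (S : ℝ → Matrix (Fin n) (Fin n) ℝ)
    (hS : ∀ (j : Fin n), ∀ t ∈ Set.Ico ((j : ℝ) * T / n) (((j : ℝ) + 1) * T / n),
      S t = (a * n / T) • Matrix.single j j 1)
    (e₁ : Fin n → ℝ) (he₁ : e₁ = fun i : Fin n => if (i : ℕ) = 0 then (1:ℝ) else 0) :
    (Matrix.of fun i j => ∫ t in (0:ℝ)..T, S t i j)
        = a • (1 : Matrix (Fin n) (Fin n) ℝ) ∧
    (∀ t ∈ Set.Ico (0:ℝ) T,
      HasDerivAt (fun _ : ℝ => e₁)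
        (-(S t).mulVec e₁ + (e₁ ⬝ᵥ (S t).mulVec e₁) • e₁) t) ∧
    (∫ t in (0:ℝ)..T, e₁ ⬝ᵥ (S t).mulVec e₁) = a ∧
    sInf (costSet a b T n) ≤ a := by
  have hn' : (0:ℝ) < n := by exact_mod_cast Nat.pos_of_ne_zero (by omega)
  set i0 : Fin n := ⟨0, hn⟩ with hi0
  have he₁' : e₁ = fun i => if i = i0 then (1:ℝ) else 0 := by
    rw [he₁]; funext i
    by_cases h : i = i0
    · subst h; simp [hi0]
    · have hv : (i:ℕ) ≠ 0 := fun hc => h (Fin.ext hc)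
      simp [h, hv]
  -- dot product identity
  have hdot : ∀ M : Matrix (Fin n) (Fin n) ℝ, e₁ ⬝ᵥ M.mulVec e₁ = M i0 i0 := by
    intro M
    rw [he₁']
    simp [dotProduct, Matrix.mulVec, mul_ite, ite_mul, Finset.sum_ite_eq, Finset.sum_ite_eq']
  have hee : e₁ ⬝ᵥ e₁ = 1 := by
    have := hdot 1; simpa [Matrix.one_mulVec, Matrix.one_apply] using this
  -- zero of ODE right hand side
  have hrhs : ∀ j : Fin n,
      -(((a * n / T) • Matrix.single j j (1:ℝ)).mulVec e₁)
        + (e₁ ⬝ᵥ ((a * n / T) • Matrix.single j j (1:ℝ)).mulVec e₁) • e₁ = 0 := by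
    intro j
    by_cases h : j = i0
    · subst h
      have h1 : (Matrix.single i0 i0 (1:ℝ)).mulVec e₁ = e₁ := by
        rw [Matrix.single_mulVec]
        rw [he₁']
        funext i
        by_cases h : i = i0 <;> simp [Function.update_apply, h]
      rw [Matrix.smul_mulVec, h1, dotProduct_smul, hee]
      simp
    · have h0 : e₁ j = 0 := by rw [he₁']; simp [h]
      have h1 : (Matrix.single j j (1:ℝ)).mulVec e₁ = 0 := by
        rw [Matrix.single_mulVec, h0]
        simp
      rw [Matrix.smul_mulVec, h1]
      simp
  -- locating pieces
  have hpiece : ∀ t ∈ Set.Ico (0:ℝ) T, ∃ j : Fin n,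
      (∀ j' : Fin n, t ∈ Set.Ico ((j':ℝ) * T / n) (((j':ℝ) + 1) * T / n) ↔ j' = j) ∧
      S t = (a * n / T) • Matrix.single j j 1 := by
    intro t ht
    have h0 : (0:ℝ) ≤ t := ht.1
    have hrn : t * n / T < n := by
      rw [div_lt_iff₀ hT]
      have := mul_lt_mul_of_pos_right ht.2 hn'
      linarith
    have hj : ⌊t * n / T⌋₊ < n := (Nat.floor_lt (by positivity)).mpr hrn
    refine ⟨⟨⌊t * n / T⌋₊, hj⟩, ?_, ?_⟩
    · intro j'
      rw [floor_piece hT hn' h0]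
      simp [Fin.ext_iff, eq_comm]
    · have hmem : t ∈ Set.Ico ((⌊t * n / T⌋₊:ℝ) * T / n) (((⌊t * n / T⌋₊:ℝ) + 1) * T / n) :=
        (floor_piece hT hn' h0 _).mpr rfl
      exact hS ⟨⌊t * n / T⌋₊, hj⟩ t hmem
  -- ent0: entry integral
  set x : ℕ → ℝ := fun j => j * T / n with hx
  have hxd : ∀ j : ℕ, x (j+1) - x j = T / n := by
    intro j; simp only [hx]; push_cast; ring
  have hxle : ∀ j : ℕ, x j ≤ x (j+1) := by
    intro j
    have h1 := hxd j
    have h2 : 0 < T / n := div_pos hT hn'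
    linarith
  have key : ∀ (i k : Fin n) (j : Fin n),
      IntervalIntegrable (fun t => S t i k) volume (x j) (x (j+1)) ∧
      (∫ t in x (j:ℕ)..x ((j:ℕ)+1), S t i k)
        = if (j:ℕ) = (i:ℕ) ∧ (j:ℕ) = (k:ℕ) then (T / n) * (a * n / T) else 0 := by
    intro i k j
    have hC : ∀ t ∈ Set.Ico (x (j:ℕ)) (x ((j:ℕ)+1)), S t i k
        = ((a * n / T) • Matrix.single j j (1:ℝ)) i k := by
      intro t ht
      rw [hS j t (by exact_mod_cast ht)]
    have hae : ∀ᵐ t : ℝ, t ∈ Set.uIoc (x (j:ℕ)) (x ((j:ℕ)+1)) →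
        S t i k = ((a * n / T) • Matrix.single j j (1:ℝ)) i k := by
      filter_upwards [ae_ne_real (x ((j:ℕ)+1))] with t hne ht
      rw [Set.uIoc_of_le (hxle _)] at ht
      exact hC t ⟨ht.1.le, lt_of_le_of_ne ht.2 hne⟩
    constructor
    · exact (intervalIntegrable_const
        (c := ((a * n / T) • Matrix.single j j (1:ℝ)) i k)).congr_ae
        ((ae_restrict_iff' measurableSet_uIoc).mpr (hae.mono fun t h ht => (h ht).symm))
    · rw [intervalIntegral.integral_congr_ae hae, intervalIntegral.integral_const,
        hxd, smul_eq_mul]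
      have : ((a * n / T) • Matrix.single j j (1:ℝ)) i k
          = if (j:ℕ) = (i:ℕ) ∧ (j:ℕ) = (k:ℕ) then a * n / T else 0 := by
        simp only [Matrix.smul_apply, Matrix.single, Matrix.of_apply, smul_eq_mul,
          Fin.ext_iff]
        split_ifs <;> simp_all
      rw [this, mul_ite, mul_zero]
  have hint : ∀ i k : Fin n, (∫ t in (0:ℝ)..T, S t i k) = if i = k then a else 0 := by
    intro i k
    have hsum := intervalIntegral.sum_integral_adjacent_intervals
      (μ := volume) (a := x) (n := n) (f := fun t => S t i k)
      (fun m hm => (key i k ⟨m, hm⟩).1)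
    have hx0 : x 0 = 0 := by simp [hx]
    have hxn : x n = T := by
      simp only [hx]; field_simp
    rw [hx0, hxn] at hsum
    rw [← hsum]
    have hterm : ∀ m ∈ Finset.range n, (∫ t in x m..x (m+1), S t i k)
        = if m = (i:ℕ) ∧ m = (k:ℕ) then (T / n) * (a * n / T) else 0 := by
      intro m hm
      exact (key i k ⟨m, Finset.mem_range.mp hm⟩).2
    rw [Finset.sum_congr rfl hterm]
    have hval : (T / n) * (a * n / T) = a := by field_simp
    by_cases hik : i = k
    · subst hik
      simp only [and_self]
      rw [Finset.sum_ite_eq' (Finset.range n) (i:ℕ) (fun _ => (T / n) * (a * n / T))]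
      simp [Finset.mem_range.mpr i.isLt, hval]
    · rw [Finset.sum_eq_zero, if_neg hik]
      intro m _
      rw [if_neg]
      rintro ⟨rfl, h2⟩
      exact hik (Fin.ext h2)
  -- Part 1
  have part1 : (Matrix.of fun i j => ∫ t in (0:ℝ)..T, S t i j)
      = a • (1 : Matrix (Fin n) (Fin n) ℝ) := by
    ext i k
    rw [Matrix.of_apply, hint i k]
    simp [Matrix.one_apply, mul_ite]
  -- Part 2
  have part2 : ∀ t ∈ Set.Ico (0:ℝ) T,
      HasDerivAt (fun _ : ℝ => e₁)
        (-(S t).mulVec e₁ + (e₁ ⬝ᵥ (S t).mulVec e₁) • e₁) t := by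
    intro t ht
    obtain ⟨j, _, hSt⟩ := hpiece t ht
    rw [hSt, hrhs j]
    exact hasDerivAt_const t e₁
  -- Part 3
  have part3 : (∫ t in (0:ℝ)..T, e₁ ⬝ᵥ (S t).mulVec e₁) = a := by
    simp_rw [hdot]
    rw [hint i0 i0, if_pos rfl]
  refine ⟨part1, part2, part3, ?_⟩
  -- Part 4
  -- measurable piecewise control
  set S' : ℝ → Matrix (Fin n) (Fin n) ℝ := fun t => ∑ j : Fin n,
    Set.indicator (Set.Ico ((j:ℝ) * T / n) (((j:ℝ) + 1) * T / n))
      (fun _ => (a * n / T) • Matrix.single j j 1) t with hS'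
  have hS'eq : ∀ t ∈ Set.Ico (0:ℝ) T, S' t = S t := by
    intro t ht
    obtain ⟨j, hiff, hSt⟩ := hpiece t ht
    rw [hSt]
    simp only [hS']
    rw [Finset.sum_eq_single_of_mem j (Finset.mem_univ j)
      (fun j' _ hne => Set.indicator_of_notMem (fun hmem => hne ((hiff j').mp hmem)) _)]
    exact Set.indicator_of_mem ((hiff j).mpr rfl) _
  have hpsdC : ∀ j : Fin n, ((a * (n:ℝ) / T) • Matrix.single j j (1:ℝ)).PosSemidef := by
    intro j
    have hdiag : (a * (n:ℝ) / T) • Matrix.single j j (1:ℝ)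
        = Matrix.diagonal (fun i => if i = j then a * n / T else 0) := by
      ext i k
      by_cases h1 : i = k
      · subst h1
        by_cases h2 : i = j <;>
          simp [Matrix.single, Matrix.diagonal_apply_eq, h2, eq_comm]
      · have hc : ¬((j = i) ∧ (j = k)) := by rintro ⟨rfl, rfl⟩; exact h1 rfl
        simp [Matrix.single, hc, Matrix.diagonal_apply_ne _ h1]
    rw [hdiag]
    refine Matrix.PosSemidef.diagonal ?_
    intro i
    dsimp
    split_ifs
    · positivity
    · exact le_refl _
  have hS'psd : ∀ t ∈ Set.Icc (0:ℝ) T, (S' t).PosSemidef := by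
    intro t ht
    rcases lt_or_eq_of_le ht.2 with h | h
    · obtain ⟨j, _, hSt⟩ := hpiece t ⟨ht.1, h⟩
      rw [hS'eq t ⟨ht.1, h⟩, hSt]
      exact hpsdC j
    · subst h
      have hz : S' t = 0 := by
        simp only [hS']
        apply Finset.sum_eq_zero
        intro j _
        apply Set.indicator_of_notMem
        intro hmem
        have hfl := (floor_piece hT hn' hT.le (j:ℕ)).mp hmem
        have hTn : t * (n:ℝ) / t = n := by field_simp
        rw [hTn, Nat.floor_natCast] at hfl
        exact absurd hfl.symm (Nat.ne_of_lt j.isLt)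
      rw [hz]
      exact Matrix.PosSemidef.zero
  have hS'meas : ∀ i k : Fin n, Measurable fun t => S' t i k := by
    intro i k
    have : (fun t => S' t i k) = fun t => ∑ j : Fin n,
        Set.indicator (Set.Ico ((j:ℝ) * T / n) (((j:ℝ) + 1) * T / n))
          (fun _ => ((a * n / T) • Matrix.single j j (1:ℝ)) i k) t := by
      funext t
      simp only [hS', Matrix.sum_apply]
      refine Finset.sum_congr rfl fun j _ => ?_
      by_cases hmem : t ∈ Set.Ico ((j:ℝ) * T / n) (((j:ℝ) + 1) * T / n) <;>
        simp [Set.indicator_apply, hmem, Matrix.single, mul_ite, mul_zero, mul_one]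
    rw [this]
    exact Finset.measurable_sum _ fun j _ =>
      Measurable.indicator measurable_const measurableSet_Ico
  have hS'int : ∀ i k : Fin n, (∫ t in (0:ℝ)..T, S' t i k) = ∫ t in (0:ℝ)..T, S t i k := by
    intro i k
    apply intervalIntegral.integral_congr_ae
    filter_upwards [ae_ne_real T] with t hne ht
    rw [Set.uIoc_of_le hT.le] at ht
    rw [hS'eq t ⟨ht.1.le, lt_of_le_of_ne ht.2 hne⟩]
  have hS'of : (Matrix.of fun i k => ∫ t in (0:ℝ)..T, S' t i k)
      = a • (1 : Matrix (Fin n) (Fin n) ℝ) := by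
    rw [← part1]
    ext i k
    simp only [Matrix.of_apply]
    exact hS'int i k
  have hmem : a ∈ costSet a b T n := by
    refine ⟨S', fun _ => e₁, hS'meas, hS'psd, ?_, ?_, ?_, ?_, ?_⟩
    · rw [hS'of, sub_self]
      exact Matrix.PosSemidef.zero
    · rw [hS'of, ← sub_smul, Matrix.smul_one_eq_diagonal]
      refine Matrix.PosSemidef.diagonal ?_
      intro i
      dsimp
      linarith
    · rw [he₁']
      have : ∀ i : Fin n, (if i = i0 then (1:ℝ) else 0) ^ 2 = if i = i0 then 1 else 0 := by
        intro i; split_ifs <;> norm_num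
      simp_rw [this]
      simp
    · intro t ht
      obtain ⟨j, _, hSt⟩ := hpiece t ht
      rw [hS'eq t ht, hSt, hrhs j]
      exact hasDerivAt_const t e₁
    · simp_rw [hdot]
      rw [hS'int i0 i0, hint i0 i0, if_pos rfl]
  have hbdd : BddBelow (costSet a b T n) := by
    refine ⟨0, ?_⟩
    rintro J ⟨Sc, ω, _, hpsd, _, _, _, _, rfl⟩
    apply intervalIntegral.integral_nonneg hT.le
    intro u hu
    have := (Matrix.posSemidef_iff_dotProduct_mulVec.mp (hpsd u hu)).2 (ω u)
    simpa using this
  exact csInf_le hbdd hmem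
end

section
/- Characteristic polynomial identity: let P = diag(-d₁,…,-dₙ) with the dᵢ pairwise distinct, and let ω, p ∈ ℝⁿ. Set M = P - (ωωᵀ + pωᵀ + ωpᵀ). Then the ratio of characteristic polynomials satisfies det(ξI - M)/det(ξI - P) = 1 + Σᵢ (ωᵢ² + 2ωᵢpᵢ + Σ_{j≠i} (ωᵢpⱼ - ωⱼpᵢ)²/(dᵢ - dⱼ)) · 1/(ξ + dᵢ), for every ξ not in {-d₁,…,-dₙ}. -/
open Matrix

private lemma sum_erase_swap {n : ℕ} (g : Fin n → Fin n → ℝ) :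
    ∑ i, ∑ j ∈ Finset.univ.erase i, g i j = ∑ i, ∑ j ∈ Finset.univ.erase i, g j i := by
  have key : ∀ h : Fin n → Fin n → ℝ,
      ∑ i, ∑ j ∈ Finset.univ.erase i, h i j = ∑ i, ∑ j, if j ≠ i then h i j else 0 := by
    intro h
    refine Finset.sum_congr rfl fun i _ => ?_
    rw [← Finset.filter_ne', Finset.sum_filter]
  rw [key, key, Finset.sum_comm]
  refine Finset.sum_congr rfl fun i _ => Finset.sum_congr rfl fun j _ => ?_
  simp [ne_comm]

private lemma alg_key {n : ℕ} (d ω p : Fin n → ℝ) (ξ : ℝ) (hs : ∀ i, ξ + d i ≠ 0)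
    (hd : Function.Injective d) :
    (1 + ∑ i, (ω i + p i) * (ξ + d i)⁻¹ * ω i) * (1 + ∑ i, ω i * (ξ + d i)⁻¹ * p i)
      - (∑ i, (ω i + p i) * (ξ + d i)⁻¹ * p i) * (∑ i, ω i * (ξ + d i)⁻¹ * ω i)
    = 1 + ∑ i, (ω i ^ 2 + 2 * ω i * p i
        + ∑ j ∈ Finset.univ.erase i, (ω i * p j - ω j * p i) ^ 2 / (d i - d j))
        * (1 / (ξ + d i)) := by
  have hdd : ∀ i j : Fin n, j ≠ i → d i - d j ≠ 0 :=
    fun i j hji => sub_ne_zero.mpr fun h => hji (hd h).symm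
  set h : Fin n → Fin n → ℝ := fun i j =>
    ((ω i + p i) * (ξ + d i)⁻¹ * ω i) * (ω j * (ξ + d j)⁻¹ * p j)
      - ((ω i + p i) * (ξ + d i)⁻¹ * p i) * (ω j * (ξ + d j)⁻¹ * ω j) with hh_def
  set t : Fin n → Fin n → ℝ := fun i j =>
    (ω i * p j - ω j * p i) ^ 2 / (d i - d j) * (1 / (ξ + d i)) with ht_def
  -- the cross-term identity
  have key : (∑ i, (ω i + p i) * (ξ + d i)⁻¹ * ω i) * (∑ i, ω i * (ξ + d i)⁻¹ * p i)
      - (∑ i, (ω i + p i) * (ξ + d i)⁻¹ * p i) * (∑ i, ω i * (ξ + d i)⁻¹ * ω i)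
      = ∑ i, ∑ j ∈ Finset.univ.erase i, t i j := by
    have step1 : (∑ i, (ω i + p i) * (ξ + d i)⁻¹ * ω i) * (∑ i, ω i * (ξ + d i)⁻¹ * p i)
        - (∑ i, (ω i + p i) * (ξ + d i)⁻¹ * p i) * (∑ i, ω i * (ξ + d i)⁻¹ * ω i)
        = ∑ i, ∑ j, h i j := by
      rw [Finset.sum_mul_sum, Finset.sum_mul_sum, ← Finset.sum_sub_distrib]
      exact Finset.sum_congr rfl fun i _ => (Finset.sum_sub_distrib _ _).symm
    rw [step1]
    have htwo : (2:ℝ) * (∑ i, ∑ j, h i j) = 2 * ∑ i, ∑ j ∈ Finset.univ.erase i, t i j := by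
      calc (2:ℝ) * (∑ i, ∑ j, h i j) = ∑ i, ∑ j, (h i j + h j i) := by
              rw [two_mul]
              nth_rewrite 2 [Finset.sum_comm]
              rw [← Finset.sum_add_distrib]
              exact Finset.sum_congr rfl fun i _ => (Finset.sum_add_distrib).symm
        _ = ∑ i, ∑ j ∈ Finset.univ.erase i, (h i j + h j i) := by
              refine Finset.sum_congr rfl fun i _ => ?_
              rw [← Finset.add_sum_erase _ _ (Finset.mem_univ i)]
              have hz : h i i + h i i = 0 := by rw [hh_def]; ring
              rw [hz, zero_add]
        _ = ∑ i, ∑ j ∈ Finset.univ.erase i, (t i j + t j i) := by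
              refine Finset.sum_congr rfl fun i _ => Finset.sum_congr rfl fun j hj => ?_
              have hji : j ≠ i := Finset.ne_of_mem_erase hj
              have h1 : d i - d j ≠ 0 := hdd i j hji
              have h2 : d j - d i ≠ 0 := hdd j i hji.symm
              have ha := hs i
              have hb := hs j
              rw [hh_def, ht_def]
              field_simp
              ring
        _ = 2 * ∑ i, ∑ j ∈ Finset.univ.erase i, t i j := by
              rw [two_mul]
              nth_rewrite 2 [sum_erase_swap]
              rw [← Finset.sum_add_distrib]
              exact Finset.sum_congr rfl fun i _ => by
                rw [Finset.sum_add_distrib, add_comm]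
    linarith
  -- assemble
  have expand : ∀ i : Fin n,
      (ω i ^ 2 + 2 * ω i * p i
        + ∑ j ∈ Finset.univ.erase i, (ω i * p j - ω j * p i) ^ 2 / (d i - d j))
        * (1 / (ξ + d i))
      = ((ω i + p i) * (ξ + d i)⁻¹ * ω i + ω i * (ξ + d i)⁻¹ * p i)
        + ∑ j ∈ Finset.univ.erase i, t i j := by
    intro i
    rw [add_mul, Finset.sum_mul, ht_def]
    congr 1
    ring
  rw [Finset.sum_congr rfl fun i _ => expand i, Finset.sum_add_distrib,
    Finset.sum_add_distrib, ← key]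
  ring

/-- Characteristic polynomial identity: for `P = diag (-d₁,…,-dₙ)` with the `dᵢ`
pairwise distinct and `M = P - (ωωᵀ + pωᵀ + ωpᵀ)`, one has, for every `ξ ∉ {-dᵢ}`,
`det (ξ•1 - M) / det (ξ•1 - P)
  = 1 + Σᵢ (ωᵢ² + 2ωᵢpᵢ + Σ_{j≠i} (ωᵢpⱼ - ωⱼpᵢ)²/(dᵢ - dⱼ)) / (ξ + dᵢ)`. -/
theorem char_poly_ratio_identity (n : ℕ) (d : Fin n → ℝ) (hd : Function.Injective d)
    (ω p : Fin n → ℝ) (P M : Matrix (Fin n) (Fin n) ℝ)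
    (hP : P = Matrix.diagonal (fun i => -d i))
    (hM : M = P - (Matrix.vecMulVec ω ω + Matrix.vecMulVec p ω + Matrix.vecMulVec ω p))
    (ξ : ℝ) (hξ : ∀ i, ξ ≠ -d i) :
    (ξ • (1 : Matrix (Fin n) (Fin n) ℝ) - M).det
        / (ξ • (1 : Matrix (Fin n) (Fin n) ℝ) - P).det
      = 1 + ∑ i, (ω i ^ 2 + 2 * ω i * p i
          + ∑ j ∈ Finset.univ.erase i, (ω i * p j - ω j * p i) ^ 2 / (d i - d j))
          * (1 / (ξ + d i)) := by
  have hs : ∀ i, ξ + d i ≠ 0 := fun i h => hξ i (by linarith)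
  set s : Fin n → ℝ := fun i => ξ + d i with hs_def
  set D : Matrix (Fin n) (Fin n) ℝ := Matrix.diagonal s with hD_def
  have hDP : ξ • (1 : Matrix (Fin n) (Fin n) ℝ) - P = D := by
    rw [hP, hD_def]
    ext i j
    by_cases h : i = j <;>
      simp [h, Matrix.diagonal_apply, Matrix.one_apply, Matrix.sub_apply, hs_def]
  have hdetD : D.det = ∏ i, s i := by rw [hD_def, Matrix.det_diagonal]
  have hdetD_ne : D.det ≠ 0 := by
    rw [hdetD]; exact Finset.prod_ne_zero_iff.mpr fun i _ => hs i
  set V : Matrix (Fin n) (Fin 2) ℝ := Matrix.of (fun i k => ![ω i, p i] k) with hV_def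
  set W : Matrix (Fin 2) (Fin n) ℝ := Matrix.of (fun k i => ![ω i + p i, ω i] k) with hW_def
  have hVW : V * W = Matrix.vecMulVec ω ω + Matrix.vecMulVec p ω + Matrix.vecMulVec ω p := by
    ext i j
    simp [Matrix.mul_apply, Fin.sum_univ_two, Matrix.vecMulVec_apply, hV_def, hW_def,
      Matrix.add_apply]
    ring
  have hMeq : ξ • (1 : Matrix (Fin n) (Fin n) ℝ) - M = D + V * W := by
    rw [hM, hVW, ← hDP]; abel
  have hDinv : D⁻¹ = Matrix.diagonal (fun i => (s i)⁻¹) := by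
    refine Matrix.inv_eq_right_inv ?_
    rw [hD_def, Matrix.diagonal_mul_diagonal]
    rw [show (fun i => s i * (s i)⁻¹) = fun _ => (1:ℝ) from funext fun i => mul_inv_cancel₀ (hs i)]
    exact Matrix.diagonal_one
  have hdet1 : (ξ • (1 : Matrix (Fin n) (Fin n) ℝ) - M).det
      = D.det * (1 + W * D⁻¹ * V).det := by
    rw [hMeq, Matrix.det_add_mul V W (isUnit_iff_ne_zero.mpr hdetD_ne)]
  set G := W * D⁻¹ * V with hG_def
  have hG : ∀ k l, G k l = ∑ i, (![ω i + p i, ω i] k) * (s i)⁻¹ * (![ω i, p i] l) := by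
    intro k l
    rw [hG_def, hDinv]
    simp [Matrix.mul_apply, Matrix.diagonal_apply, Finset.sum_mul, hV_def, hW_def,
      Finset.mul_sum]
  have hdet2 : (1 + G).det
      = (1 + ∑ i, (ω i + p i) * (s i)⁻¹ * ω i) * (1 + ∑ i, ω i * (s i)⁻¹ * p i)
        - (∑ i, (ω i + p i) * (s i)⁻¹ * p i) * (∑ i, ω i * (s i)⁻¹ * ω i) := by
    rw [Matrix.det_fin_two]
    simp [Matrix.add_apply, Matrix.one_apply, hG]
  rw [hdet1, hDP, mul_div_cancel_left₀ _ hdetD_ne, hdet2]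
  exact alg_key d ω p ξ hs hd
end

section
/- Let H : T*𝕊ⁿ⁻¹ → ℝ be smooth, where T*𝕊ⁿ⁻¹ is identified with {(ω,p) ∈ ℝⁿ×ℝⁿ : ‖ω‖=1, pᵀω=0}. Then the tangent space at (ω,p) is {(v₁,v₂) : ωᵀv₁ = 0, pᵀv₁ + ωᵀv₂ = 0}, and the Hamiltonian vector field of H is given by ω' = ∂H/∂p - (ωᵀ ∂H/∂p)ω and p' = ∂H/∂ω - (ωᵀ ∂H/∂ω)ω - (ωᵀ ∂H/∂p)p + (pᵀ ∂H/∂p)ω. -/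
open Matrix Filter Topology


/-- dot product of limits -/
lemma tendsto_dotProduct_aux {n : ℕ} {α : Type*} {l : Filter α}
    {f g : α → Fin n → ℝ} {a b : Fin n → ℝ}
    (hf : Tendsto f l (𝓝 a)) (hg : Tendsto g l (𝓝 b)) :
    Tendsto (fun k => f k ⬝ᵥ g k) l (𝓝 (a ⬝ᵥ b)) := by
  have hf' := tendsto_pi_nhds.mp hf
  have hg' := tendsto_pi_nhds.mp hg
  unfold dotProduct
  exact tendsto_finset_sum _ fun i _ => (hf' i).mul (hg' i)

lemma perp_span_aux {n : ℕ} (ω u : Fin n → ℝ) (hωω : ω ⬝ᵥ ω = 1)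
    (h : ∀ v : Fin n → ℝ, ω ⬝ᵥ v = 0 → u ⬝ᵥ v = 0) : u = (ω ⬝ᵥ u) • ω := by
  set w := u - (ω ⬝ᵥ u) • ω with hw
  have hωw : ω ⬝ᵥ w = 0 := by
    simp [hw, dotProduct_sub, dotProduct_smul, hωω, smul_eq_mul]
  have huw := h w hωw
  have hww : w ⬝ᵥ w = 0 := by
    have : w ⬝ᵥ w = u ⬝ᵥ w - (ω ⬝ᵥ u) * (ω ⬝ᵥ w) := by
      simp [hw, sub_dotProduct, smul_dotProduct, smul_eq_mul,
        dotProduct_sub, dotProduct_smul, dotProduct_comm u ω]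
    rw [this, huw, hωw]; ring
  have : w = 0 := dotProduct_self_eq_zero.mp hww
  exact (sub_eq_zero.mp this)


/-- Hamiltonian vector field on `T*𝕊ⁿ⁻¹ = {(ω,p) : ‖ω‖ = 1, pᵀω = 0} ⊆ ℝⁿ × ℝⁿ`.
The tangent space (tangent cone) at `(ω,p)` is `{(v₁,v₂) : ωᵀv₁ = 0, pᵀv₁ + ωᵀv₂ = 0}`,
and if `(vHp, -vHω)` is the Hamiltonian vector field of a Hamiltonian with partial
gradients `(Hω, Hp)` — i.e. `ωᵀvHp = 0`, `pᵀvHp = ωᵀvHω`, and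
`v₁ᵀHω + v₂ᵀHp = v₁ᵀvHω + v₂ᵀvHp` for every tangent vector `(v₁,v₂)` — then
`vHp = ∂H/∂p - (ωᵀ∂H/∂p)ω` and
`vHω = ∂H/∂ω - (ωᵀ∂H/∂ω)ω - (ωᵀ∂H/∂p)p + (pᵀ∂H/∂p)ω`,
so that `ω' = vHp` and `p' = vHω` as in the statement. -/
theorem hamiltonian_vector_field_sphere (n : ℕ)
    (ω p : Fin n → ℝ) (hω : ∑ i, ω i ^ 2 = 1) (hpω : p ⬝ᵥ ω = 0)
    (Hω Hp vHω vHp : Fin n → ℝ)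
    (h1 : ω ⬝ᵥ vHp = 0)
    (h2 : p ⬝ᵥ vHp = ω ⬝ᵥ vHω)
    (h3 : ∀ v₁ v₂ : Fin n → ℝ, ω ⬝ᵥ v₁ = 0 → p ⬝ᵥ v₁ + ω ⬝ᵥ v₂ = 0 →
      v₁ ⬝ᵥ Hω + v₂ ⬝ᵥ Hp = v₁ ⬝ᵥ vHω + v₂ ⬝ᵥ vHp) :
    (tangentConeAt ℝ
        ({z : (Fin n → ℝ) × (Fin n → ℝ) | (∑ i, z.1 i ^ 2 = 1) ∧ z.2 ⬝ᵥ z.1 = 0})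
        (ω, p)
      = {v : (Fin n → ℝ) × (Fin n → ℝ) | ω ⬝ᵥ v.1 = 0 ∧ p ⬝ᵥ v.1 + ω ⬝ᵥ v.2 = 0}) ∧
    vHp = Hp - (ω ⬝ᵥ Hp) • ω ∧
    vHω = Hω - (ω ⬝ᵥ Hω) • ω - (ω ⬝ᵥ Hp) • p + (p ⬝ᵥ Hp) • ω := by
  constructor
  · apply Set.Subset.antisymm
    · have hωω : ω ⬝ᵥ ω = 1 := by simpa [dotProduct, sq] using hω
      rintro ⟨v₁, v₂⟩ hv
      obtain ⟨c, d, hc, hds, hcd⟩ := mem_tangentConeAt_iff_exists_seq_norm_tendsto_atTop.mp hv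
      have hd0 : Tendsto d atTop (𝓝 0) := tangentConeAt.lim_zero atTop hc hcd
      have hd1 : Tendsto (fun k => (d k).1) atTop (𝓝 0) := by
        exact (continuous_fst.tendsto _).comp hd0
      have hcd1 : Tendsto (fun k => c k • (d k).1) atTop (𝓝 v₁) := by
        exact (continuous_fst.tendsto _).comp hcd
      have hcd2 : Tendsto (fun k => c k • (d k).2) atTop (𝓝 v₂) := by
        exact (continuous_snd.tendsto _).comp hcd
      -- dot product facts from membership
      have hmem : ∀ᶠ k in atTop,
          2 * (ω ⬝ᵥ (c k • (d k).1)) + (c k • (d k).1) ⬝ᵥ (d k).1 = 0 ∧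
          p ⬝ᵥ (c k • (d k).1) + (c k • (d k).2) ⬝ᵥ ω + (c k • (d k).2) ⬝ᵥ (d k).1 = 0 := by
        filter_upwards [hds] with k hk
        obtain ⟨hk1, hk2⟩ := hk
        have hk1' : (ω + (d k).1) ⬝ᵥ (ω + (d k).1) = 1 := by
          simpa [dotProduct, sq] using hk1
        have e1 : 2 * (ω ⬝ᵥ (d k).1) + (d k).1 ⬝ᵥ (d k).1 = 0 := by
          have := hk1'
          simp only [add_dotProduct, dotProduct_add, hωω, dotProduct_comm (d k).1 ω] at this
          linarith
        have e2 : p ⬝ᵥ (d k).1 + (d k).2 ⬝ᵥ ω + (d k).2 ⬝ᵥ (d k).1 = 0 := by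
          have := hk2
          simp only [Prod.fst_add, Prod.snd_add, add_dotProduct, dotProduct_add, hpω] at this
          linarith
        constructor
        · have := congrArg (fun x => c k * x) e1
          simp only [mul_zero] at this
          simp only [dotProduct_smul, smul_dotProduct, smul_eq_mul]
          linarith [this]
        · have := congrArg (fun x => c k * x) e2
          simp only [mul_zero] at this
          simp only [dotProduct_smul, smul_dotProduct, smul_eq_mul]
          linarith [this]
      have lim1 : Tendsto (fun k => 2 * (ω ⬝ᵥ (c k • (d k).1)) + (c k • (d k).1) ⬝ᵥ (d k).1)
          atTop (𝓝 (2 * (ω ⬝ᵥ v₁) + v₁ ⬝ᵥ 0)) :=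
        ((tendsto_dotProduct_aux tendsto_const_nhds hcd1).const_mul 2).add
          (tendsto_dotProduct_aux hcd1 hd1)
      have lim2 : Tendsto (fun k => p ⬝ᵥ (c k • (d k).1) + (c k • (d k).2) ⬝ᵥ ω
            + (c k • (d k).2) ⬝ᵥ (d k).1)
          atTop (𝓝 (p ⬝ᵥ v₁ + v₂ ⬝ᵥ ω + v₂ ⬝ᵥ 0)) :=
        ((tendsto_dotProduct_aux tendsto_const_nhds hcd1).add
          (tendsto_dotProduct_aux hcd2 tendsto_const_nhds)).add
          (tendsto_dotProduct_aux hcd2 hd1)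
      have z1 : 2 * (ω ⬝ᵥ v₁) + v₁ ⬝ᵥ 0 = 0 :=
        tendsto_nhds_unique (lim1.congr' (by filter_upwards [hmem] with k hk; exact hk.1))
          tendsto_const_nhds
      have z2 : p ⬝ᵥ v₁ + v₂ ⬝ᵥ ω + v₂ ⬝ᵥ 0 = 0 :=
        tendsto_nhds_unique (lim2.congr' (by filter_upwards [hmem] with k hk; exact hk.2))
          tendsto_const_nhds
      simp only [dotProduct_zero] at z1 z2
      refine ⟨by linarith, ?_⟩
      rw [dotProduct_comm ω v₂]
      linarith
    · have hωω : ω ⬝ᵥ ω = 1 := by simpa [dotProduct, sq] using hω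
      rintro ⟨v₁, v₂⟩ ⟨hv1, hv2⟩
      simp only [Set.mem_setOf_eq] at hv1 hv2
      set a : ℝ := v₁ ⬝ᵥ v₁ with ha
      set b : ℝ := v₂ ⬝ᵥ v₁ with hb
      have hanneg : 0 ≤ a := Finset.sum_nonneg fun i _ => mul_self_nonneg _
      set σ : ℝ → ℝ := fun t => Real.sqrt (1 + a * t ^ 2) with hσ
      have hpos : ∀ t : ℝ, (0:ℝ) < 1 + a * t ^ 2 := fun t => by positivity
      have hσpos : ∀ t, 0 < σ t := fun t => Real.sqrt_pos.mpr (hpos t)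
      have hσsq : ∀ t, σ t ^ 2 = 1 + a * t ^ 2 := fun t => Real.sq_sqrt (hpos t).le
      have hσ0 : σ 0 = 1 := by simp [hσ]
      set w : ℝ → (Fin n → ℝ) := fun t => (σ t)⁻¹ • (ω + t • v₁) with hw
      set γ : ℝ → (Fin n → ℝ) × (Fin n → ℝ) :=
        fun t => (w t, (p + t • v₂) - ((σ t)⁻¹ * (b * t ^ 2)) • w t) with hγ
      -- dot product computations
      have q1 : ∀ t : ℝ, (ω + t • v₁) ⬝ᵥ (ω + t • v₁) = 1 + a * t ^ 2 := by
        intro t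
        simp only [add_dotProduct, dotProduct_add, smul_dotProduct, dotProduct_smul,
          hωω, hv1, smul_eq_mul, dotProduct_comm v₁ ω, ← ha]
        ring
      have hww : ∀ t : ℝ, w t ⬝ᵥ w t = 1 := by
        intro t
        simp only [hw, smul_dotProduct, dotProduct_smul, smul_eq_mul, q1, ← hσsq]
        have := (hσpos t).ne'
        field_simp
      have q2 : ∀ t : ℝ, (p + t • v₂) ⬝ᵥ (ω + t • v₁) = b * t ^ 2 := by
        intro t
        have hωv₂ : v₂ ⬝ᵥ ω = ω ⬝ᵥ v₂ := dotProduct_comm _ _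
        simp only [add_dotProduct, dotProduct_add, smul_dotProduct, dotProduct_smul,
          hpω, smul_eq_mul, ← hb]
        rw [hωv₂]
        linear_combination t * hv2
      have hpw : ∀ t : ℝ, (p + t • v₂) ⬝ᵥ w t = (σ t)⁻¹ * (b * t ^ 2) := by
        intro t
        simp only [hw, dotProduct_smul, smul_eq_mul, q2]
      -- membership
      have hmem : ∀ t : ℝ, γ t ∈
          {z : (Fin n → ℝ) × (Fin n → ℝ) | (∑ i, z.1 i ^ 2 = 1) ∧ z.2 ⬝ᵥ z.1 = 0} := by
        intro t
        constructor
        · have : (γ t).1 ⬝ᵥ (γ t).1 = 1 := hww t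
          simpa [dotProduct, sq] using this
        · show ((p + t • v₂) - ((σ t)⁻¹ * (b * t ^ 2)) • w t) ⬝ᵥ w t = 0
          simp only [sub_dotProduct, smul_dotProduct, smul_eq_mul, hpw t, hww t]
          ring
      -- derivative
      have hg : HasDerivAt (fun t : ℝ => 1 + a * t ^ 2) 0 0 := by
        have := ((hasDerivAt_pow 2 (0:ℝ)).const_mul a).const_add 1
        simpa using this
      have hσd : HasDerivAt σ 0 0 := by
        have h1 : HasDerivAt Real.sqrt (1 / (2 * Real.sqrt (1 + a * 0 ^ 2))) (1 + a * 0 ^ 2) :=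
          Real.hasDerivAt_sqrt (by norm_num)
        have := h1.comp 0 hg
        simp [hσ, Function.comp] at this; exact this
      have hinv : HasDerivAt (fun t => (σ t)⁻¹) 0 0 := by
        have := hσd.inv (by rw [hσ0]; norm_num)
        simp at this; exact this
      have hlin : HasDerivAt (fun t : ℝ => ω + t • v₁) v₁ 0 := by
        have : HasDerivAt (fun t : ℝ => t • v₁) v₁ 0 := by
          simpa using (hasDerivAt_id (0:ℝ)).smul_const v₁
        simpa using this.const_add ω
      have hwd : HasDerivAt w v₁ 0 := by
        have := hinv.smul hlin
        simp only [hσ0, inv_one, one_smul, zero_smul, smul_zero, add_zero, smul_add,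
          zero_add] at this
        exact this
      have hlin2 : HasDerivAt (fun t : ℝ => p + t • v₂) v₂ 0 := by
        have : HasDerivAt (fun t : ℝ => t • v₂) v₂ 0 := by
          simpa using (hasDerivAt_id (0:ℝ)).smul_const v₂
        simpa using this.const_add p
      have hm : HasDerivAt (fun t : ℝ => (σ t)⁻¹ * (b * t ^ 2)) 0 0 := by
        have h2 : HasDerivAt (fun t : ℝ => b * t ^ 2) 0 0 := by
          simpa using (hasDerivAt_pow 2 (0:ℝ)).const_mul b
        have := hinv.mul h2
        simp at this; exact this
      have hγ2 : HasDerivAt (fun t => (p + t • v₂) - ((σ t)⁻¹ * (b * t ^ 2)) • w t) v₂ 0 := by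
        have hms : HasDerivAt (fun t => ((σ t)⁻¹ * (b * t ^ 2)) • w t) 0 0 := by
          have := hm.smul hwd
          simp at this; exact this
        have := hlin2.sub hms
        simp at this; exact this
      have hγd : HasDerivAt γ (v₁, v₂) 0 := hwd.prodMk hγ2
      have hγ0 : γ 0 = (ω, p) := by
        simp [hγ, hw, hσ0]
      -- tangent cone membership
      refine mem_tangentConeAt_iff_exists_seq_norm_tendsto_atTop.mpr
        ⟨fun k => (k : ℝ) + 1, fun k => γ (((k : ℝ) + 1)⁻¹) - (ω, p), ?_, ?_, ?_⟩
      swap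
      · filter_upwards with k
        simpa [add_sub_cancel] using hmem (((k : ℝ) + 1)⁻¹)
      · have h1 : Tendsto (fun k : ℕ => (k : ℝ) + 1) atTop atTop :=
          tendsto_atTop_add_const_right _ 1 tendsto_natCast_atTop_atTop
        refine h1.congr fun k => ?_
        rw [Real.norm_of_nonneg (by positivity)]
      · have hslope : Tendsto (slope γ 0) (𝓝[≠] 0) (𝓝 (v₁, v₂)) :=
          hasDerivAt_iff_tendsto_slope.mp hγd
        have htk : Tendsto (fun k : ℕ => ((k : ℝ) + 1)⁻¹) atTop (𝓝[≠] (0:ℝ)) := by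
          apply tendsto_nhdsWithin_of_tendsto_nhds_of_eventually_within
          · exact tendsto_inv_atTop_zero.comp
              (tendsto_atTop_add_const_right _ 1 tendsto_natCast_atTop_atTop)
          · filter_upwards with k
            simp only [Set.mem_compl_iff, Set.mem_singleton_iff]
            positivity
        have := hslope.comp htk
        refine this.congr fun k => ?_
        simp only [Function.comp_apply, slope_def_module, sub_zero, inv_inv, hγ0]
  · have hωω : ω ⬝ᵥ ω = 1 := by simpa [dotProduct, sq] using hω
    have hωp : ω ⬝ᵥ p = 0 := by rwa [dotProduct_comm]
    -- vHp
    have key1 : ∀ v : Fin n → ℝ, ω ⬝ᵥ v = 0 → (Hp - vHp) ⬝ᵥ v = 0 := by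
      intro v hv
      have := h3 0 v (by simp) (by simp [hv])
      simp only [zero_dotProduct, zero_add] at this
      simp [sub_dotProduct, dotProduct_comm Hp v, dotProduct_comm vHp v, this]
    have e1 : Hp - vHp = (ω ⬝ᵥ (Hp - vHp)) • ω := perp_span_aux ω _ hωω key1
    have hvHp : vHp = Hp - (ω ⬝ᵥ Hp) • ω := by
      have : ω ⬝ᵥ (Hp - vHp) = ω ⬝ᵥ Hp := by simp [dotProduct_sub, h1]
      rw [this] at e1
      linear_combination (norm := module) -e1
    refine ⟨hvHp, ?_⟩
    -- vHω
    have hpvHp : p ⬝ᵥ vHp = p ⬝ᵥ Hp := by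
      rw [hvHp]; simp [dotProduct_sub, dotProduct_smul, hpω, smul_eq_mul]
    have key2 : ∀ v : Fin n → ℝ, ω ⬝ᵥ v = 0 →
        (Hω - (ω ⬝ᵥ Hp) • p - vHω) ⬝ᵥ v = 0 := by
      intro v hv
      have e := h3 v (-(p ⬝ᵥ v) • ω) hv (by simp [dotProduct_smul, smul_eq_mul, hωω])
      simp only [neg_smul, neg_dotProduct, smul_dotProduct, smul_eq_mul, h1, mul_zero,
        neg_zero, add_zero, dotProduct_comm p v] at e
      simp only [sub_dotProduct, smul_dotProduct, smul_eq_mul, dotProduct_comm Hω v,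
        dotProduct_comm vHω v, dotProduct_comm p v]
      linarith [e]
    have e2 : Hω - (ω ⬝ᵥ Hp) • p - vHω =
        (ω ⬝ᵥ (Hω - (ω ⬝ᵥ Hp) • p - vHω)) • ω := perp_span_aux ω _ hωω key2
    have hc : ω ⬝ᵥ (Hω - (ω ⬝ᵥ Hp) • p - vHω) = ω ⬝ᵥ Hω - p ⬝ᵥ Hp := by
      simp [dotProduct_sub, dotProduct_smul, hωp, smul_eq_mul, ← h2, hpvHp]
    rw [hc, sub_smul] at e2
    linear_combination (norm := module) -e2
end

section
/- For γ ∈ (0,π), the ratio K₊(γ)/K₋(γ) = (K(cos(γ/2)) - E(cos(γ/2)))/E(cos(γ/2)) is strictly decreasing in γ, tends to +∞ as γ → 0⁺, and tends to 0 as γ → π⁻. Hence for any ratio ρ > 0 there exists a unique γ ∈ (0,π) with K₊(γ)/K₋(γ) = ρ. -/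
open Real Filter

/-- Complete elliptic integral of the first kind. -/
noncomputable def ellipticK (x : ℝ) : ℝ :=
  ∫ u in (0:ℝ)..(Real.pi/2), 1 / Real.sqrt (1 - x ^ 2 * Real.sin u ^ 2)

/-- Complete elliptic integral of the second kind. -/
noncomputable def ellipticE (x : ℝ) : ℝ :=
  ∫ u in (0:ℝ)..(Real.pi/2), Real.sqrt (1 - x ^ 2 * Real.sin u ^ 2)


namespace EllAux
open intervalIntegral Set

lemma Dpos {x : ℝ} (hx : x ^ 2 < 1) (u : ℝ) : 0 < 1 - x ^ 2 * Real.sin u ^ 2 := by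
  nlinarith [Real.sin_sq_le_one u, sq_nonneg x, sq_nonneg (Real.sin u)]

lemma Dle {x : ℝ} (u : ℝ) : 1 - x ^ 2 * Real.sin u ^ 2 ≤ 1 := by
  nlinarith [sq_nonneg x, sq_nonneg (Real.sin u)]

lemma contE : Continuous ellipticE := by
  apply intervalIntegral.continuous_parametric_intervalIntegral_of_continuous'
  exact (continuous_const.sub ((continuous_fst.pow 2).mul
    ((Real.continuous_sin.comp continuous_snd).pow 2))).sqrt

lemma intE (x : ℝ) : IntervalIntegrable
    (fun u => Real.sqrt (1 - x ^ 2 * Real.sin u ^ 2)) MeasureTheory.volume 0 (π/2) := by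
  apply Continuous.intervalIntegrable
  fun_prop

lemma contKintegrand {x : ℝ} (hx : x ^ 2 < 1) :
    Continuous (fun u => 1 / Real.sqrt (1 - x ^ 2 * Real.sin u ^ 2)) := by
  apply Continuous.div continuous_const
  · fun_prop
  · intro u
    exact (Real.sqrt_pos.2 (Dpos hx u)).ne'

lemma intK {x : ℝ} (hx : x ^ 2 < 1) : IntervalIntegrable
    (fun u => 1 / Real.sqrt (1 - x ^ 2 * Real.sin u ^ 2)) MeasureTheory.volume 0 (π/2) :=
  (contKintegrand hx).intervalIntegrable _ _

lemma E_ge_one {x : ℝ} (hx : x ^ 2 ≤ 1) : 1 ≤ ellipticE x := by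
  have h : ∀ u ∈ Icc (0:ℝ) (π/2), Real.cos u ≤ Real.sqrt (1 - x ^ 2 * Real.sin u ^ 2) := by
    intro u hu
    have h1 : Real.cos u ^ 2 ≤ 1 - x ^ 2 * Real.sin u ^ 2 := by
      have := Real.sin_sq_add_cos_sq u
      nlinarith [sq_nonneg (Real.sin u), sq_nonneg x]
    calc Real.cos u = Real.sqrt (Real.cos u ^ 2) := by
          rw [Real.sqrt_sq (Real.cos_nonneg_of_mem_Icc ⟨by linarith [hu.1, Real.pi_pos.le], hu.2⟩)]
      _ ≤ _ := Real.sqrt_le_sqrt h1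
  have := intervalIntegral.integral_mono_on (by positivity : (0:ℝ) ≤ π/2)
    (Real.continuous_cos.intervalIntegrable _ _) (intE x) h
  rwa [integral_cos, Real.sin_pi_div_two, Real.sin_zero, sub_zero] at this

lemma E_le {x : ℝ} : ellipticE x ≤ π / 2 := by
  have h : ∀ u ∈ Icc (0:ℝ) (π/2), Real.sqrt (1 - x ^ 2 * Real.sin u ^ 2) ≤ 1 := by
    intro u _
    calc Real.sqrt (1 - x ^ 2 * Real.sin u ^ 2) ≤ Real.sqrt 1 := Real.sqrt_le_sqrt (Dle u)
      _ = 1 := Real.sqrt_one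
  have := intervalIntegral.integral_mono_on (by positivity : (0:ℝ) ≤ π/2)
    (intE x) (continuous_const.intervalIntegrable _ _) h
  simpa [ellipticE] using this

lemma E_pos {x : ℝ} (hx : x ^ 2 ≤ 1) : 0 < ellipticE x :=
  lt_of_lt_of_le one_pos (E_ge_one hx)

lemma KsubE {x : ℝ} (hx : x ^ 2 < 1) : ellipticK x - ellipticE x =
    ∫ u in (0:ℝ)..(π/2), x ^ 2 * Real.sin u ^ 2 / Real.sqrt (1 - x ^ 2 * Real.sin u ^ 2) := by
  rw [ellipticK, ellipticE, ← intervalIntegral.integral_sub (intK hx) (intE x)]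
  apply intervalIntegral.integral_congr
  intro u _
  have hD := Dpos hx u
  have hs : Real.sqrt (1 - x ^ 2 * Real.sin u ^ 2) ^ 2 = 1 - x ^ 2 * Real.sin u ^ 2 :=
    Real.sq_sqrt hD.le
  have hs0 : Real.sqrt (1 - x ^ 2 * Real.sin u ^ 2) ≠ 0 := (Real.sqrt_pos.2 hD).ne'
  field_simp
  linarith [hs]

lemma contKE {x : ℝ} (hx : x ^ 2 < 1) :
    Continuous (fun u => x ^ 2 * Real.sin u ^ 2 / Real.sqrt (1 - x ^ 2 * Real.sin u ^ 2)) := by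
  apply Continuous.div
  · fun_prop
  · fun_prop
  · intro u; exact (Real.sqrt_pos.2 (Dpos hx u)).ne'

lemma KE_nonneg {x : ℝ} (hx : x ^ 2 < 1) : 0 ≤ ellipticK x - ellipticE x := by
  rw [KsubE hx]
  apply intervalIntegral.integral_nonneg (by positivity)
  intro u _
  positivity

/-- K - E is strictly monotone on [0,1). -/
lemma KE_strictMono {x y : ℝ} (hx : 0 ≤ x) (hxy : x < y) (hy : y < 1) :
    ellipticK x - ellipticE x < ellipticK y - ellipticE y := by
  have hx1 : x ^ 2 < 1 := by nlinarith
  have hy1 : y ^ 2 < 1 := by nlinarith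
  rw [KsubE hx1, KsubE hy1]
  have key : ∀ u : ℝ, Real.sin u ^ 2 ≤ 1 →
      x ^ 2 * Real.sin u ^ 2 / Real.sqrt (1 - x ^ 2 * Real.sin u ^ 2)
      ≤ y ^ 2 * Real.sin u ^ 2 / Real.sqrt (1 - y ^ 2 * Real.sin u ^ 2) := by
    intro u hsu
    have hxy2 : x ^ 2 ≤ y ^ 2 := by nlinarith
    have hDy : 0 < 1 - y ^ 2 * Real.sin u ^ 2 := Dpos hy1 u
    have hsle : Real.sqrt (1 - y ^ 2 * Real.sin u ^ 2) ≤ Real.sqrt (1 - x ^ 2 * Real.sin u ^ 2) := by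
      apply Real.sqrt_le_sqrt; nlinarith [sq_nonneg (Real.sin u)]
    exact div_le_div₀ (by positivity) (by nlinarith [sq_nonneg (Real.sin u)])
      (Real.sqrt_pos.2 hDy) hsle
  apply intervalIntegral.integral_lt_integral_of_continuousOn_of_le_of_exists_lt
    (by positivity) (contKE hx1).continuousOn (contKE hy1).continuousOn
  · intro u _; exact key u (Real.sin_sq_le_one u)
  · refine ⟨π/2, ⟨by positivity, le_refl _⟩, ?_⟩
    simp only [Real.sin_pi_div_two, one_pow, mul_one]
    have h1 : Real.sqrt (1 - y ^ 2) ≤ Real.sqrt (1 - x ^ 2) := by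
      apply Real.sqrt_le_sqrt; nlinarith
    have h2 : 0 < Real.sqrt (1 - y ^ 2) := Real.sqrt_pos.2 (by nlinarith)
    have h3 : 0 < Real.sqrt (1 - x ^ 2) := Real.sqrt_pos.2 (by nlinarith)
    calc x ^ 2 / Real.sqrt (1 - x ^ 2) ≤ x ^ 2 / Real.sqrt (1 - y ^ 2) :=
          div_le_div₀ (sq_nonneg _) (le_refl _) h2 h1
      _ < y ^ 2 / Real.sqrt (1 - y ^ 2) := by
          apply (div_lt_div_iff_of_pos_right h2).2; nlinarith

/-- E is antitone on [0,1]. -/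
lemma E_anti {x y : ℝ} (hx : 0 ≤ x) (hxy : x ≤ y) : ellipticE y ≤ ellipticE x := by
  apply intervalIntegral.integral_mono_on (by positivity) (intE y) (intE x)
  intro u _
  apply Real.sqrt_le_sqrt
  have hxy2 : x ^ 2 ≤ y ^ 2 := by nlinarith
  nlinarith [sq_nonneg (Real.sin u)]

/-- lower bound for K -/
lemma K_lb {x : ℝ} (hx : x ^ 2 < 1) :
    Real.log ((Real.sqrt (1 - x ^ 2) + π/2) / Real.sqrt (1 - x ^ 2)) ≤ ellipticK x := by
  set ε := Real.sqrt (1 - x ^ 2) with hε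
  have hε0 : 0 < ε := Real.sqrt_pos.2 (by nlinarith)
  have hcalc : ∫ u in (0:ℝ)..(π/2), (ε + π/2 - u)⁻¹ = Real.log ((ε + π/2) / ε) := by
    have := intervalIntegral.integral_comp_sub_left (a := (0:ℝ)) (b := π/2)
      (fun t : ℝ => t⁻¹) (ε + π/2)
    simp only [sub_zero, add_sub_cancel_right] at this
    rw [this, integral_inv_of_pos hε0 (by positivity)]
  rw [← hcalc]
  apply intervalIntegral.integral_mono_on (by positivity)
  · apply ContinuousOn.intervalIntegrable
    apply ContinuousOn.inv₀ (by fun_prop)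
    intro u hu
    rw [uIcc_of_le (by positivity : (0:ℝ) ≤ π/2)] at hu
    have : (0:ℝ) < ε + π/2 - u := by linarith [hu.2]
    exact this.ne'
  · exact intK hx
  · intro u hu
    have hD := Dpos hx u
    have hsin : Real.sin u ^ 2 = 1 - Real.cos u ^ 2 := by
      nlinarith [Real.sin_sq_add_cos_sq u]
    have hcos0 : 0 ≤ Real.cos u := Real.cos_nonneg_of_mem_Icc
      ⟨by linarith [hu.1, Real.pi_pos.le], hu.2⟩
    have h1 : 1 - x ^ 2 * Real.sin u ^ 2 ≤ (ε + Real.cos u) ^ 2 := by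
      have hε2 : ε ^ 2 = 1 - x ^ 2 := Real.sq_sqrt (by nlinarith)
      nlinarith [sq_nonneg (Real.cos u), sq_nonneg x, mul_nonneg hε0.le hcos0]
    have h2 : Real.sqrt (1 - x ^ 2 * Real.sin u ^ 2) ≤ ε + Real.cos u := by
      calc Real.sqrt (1 - x ^ 2 * Real.sin u ^ 2) ≤ Real.sqrt ((ε + Real.cos u) ^ 2) :=
            Real.sqrt_le_sqrt h1
        _ = ε + Real.cos u := Real.sqrt_sq (by positivity)
    have h3 : Real.cos u ≤ π/2 - u := by
      have := Real.sin_le (x := π/2 - u) (by linarith [hu.2])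
      rwa [Real.sin_pi_div_two_sub] at this
    have h4 : Real.sqrt (1 - x ^ 2 * Real.sin u ^ 2) ≤ ε + π/2 - u := by linarith
    rw [one_div]
    exact inv_anti₀ (Real.sqrt_pos.2 hD) h4

lemma contK : ContinuousOn ellipticK (Ioo (-1 : ℝ) 1) := by
  rw [continuousOn_iff_continuous_restrict]
  have : (Ioo (-1:ℝ) 1).restrict ellipticK = fun x : Ioo (-1:ℝ) 1 =>
      ∫ u in (0:ℝ)..(π/2), 1 / Real.sqrt (1 - (x:ℝ) ^ 2 * Real.sin u ^ 2) := rfl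
  change Continuous ((Ioo (-1:ℝ) 1).restrict ellipticK)
  rw [this]
  apply intervalIntegral.continuous_parametric_intervalIntegral_of_continuous'
  apply Continuous.div continuous_const
  · fun_prop
  · rintro ⟨⟨x, hx⟩, u⟩
    apply (Real.sqrt_pos.2 _).ne'
    exact Dpos (by nlinarith [hx.1, hx.2]) u

noncomputable def gfun (x : ℝ) : ℝ := (ellipticK x - ellipticE x) / ellipticE x

lemma KE_ub {x : ℝ} (hx0 : 0 ≤ x) (hx : x ^ 2 < 1) :
    ellipticK x - ellipticE x ≤ π/2 * (x ^ 2 / Real.sqrt (1 - x ^ 2)) := by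
  rw [KsubE hx]
  have hpt : ∀ u ∈ Icc (0:ℝ) (π/2),
      x ^ 2 * Real.sin u ^ 2 / Real.sqrt (1 - x ^ 2 * Real.sin u ^ 2)
        ≤ x ^ 2 / Real.sqrt (1 - x ^ 2) := by
    intro u _
    have hD := Dpos hx u
    have hs : Real.sqrt (1 - x ^ 2) ≤ Real.sqrt (1 - x ^ 2 * Real.sin u ^ 2) := by
      apply Real.sqrt_le_sqrt; nlinarith [Real.sin_sq_le_one u, sq_nonneg x]
    have hnum : x ^ 2 * Real.sin u ^ 2 ≤ x ^ 2 := by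
      nlinarith [Real.sin_sq_le_one u, sq_nonneg x]
    exact div_le_div₀ (sq_nonneg x) hnum (Real.sqrt_pos.2 (by nlinarith)) hs
  have h := intervalIntegral.integral_mono_on (by positivity : (0:ℝ) ≤ π/2)
    ((contKE hx).intervalIntegrable 0 (π/2))
    (_root_.intervalIntegrable_const (μ := MeasureTheory.volume)
      (c := x ^ 2 / Real.sqrt (1 - x ^ 2))) hpt
  rw [intervalIntegral.integral_const, smul_eq_mul, sub_zero] at h
  exact h

lemma g_strictMono : StrictMonoOn gfun (Ico 0 1) := by
  rintro x ⟨hx0, hx1⟩ y ⟨hy0, hy1⟩ hxy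
  have hx2 : x ^ 2 ≤ 1 := by nlinarith
  have hy2 : y ^ 2 ≤ 1 := by nlinarith
  have h1 : ellipticK x - ellipticE x < ellipticK y - ellipticE y := KE_strictMono hx0 hxy hy1
  have h2 : ellipticE y ≤ ellipticE x := E_anti hx0 hxy.le
  have h3 : 0 < ellipticE y := E_pos hy2
  have h4 : 0 ≤ ellipticK x - ellipticE x := KE_nonneg (by nlinarith)
  calc gfun x = (ellipticK x - ellipticE x) / ellipticE x := rfl
    _ ≤ (ellipticK x - ellipticE x) / ellipticE y :=
        div_le_div_of_nonneg_left h4 h3 h2 |>.trans_eq rfl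
    _ < (ellipticK y - ellipticE y) / ellipticE y := by
        apply (div_lt_div_iff_of_pos_right h3).2 h1

lemma sqrt_to_zero : Tendsto (fun x : ℝ => Real.sqrt (1 - x ^ 2))
    (nhdsWithin 1 (Ioo 0 1)) (nhdsWithin 0 (Ioi 0)) := by
  apply tendsto_nhdsWithin_of_tendsto_nhds_of_eventually_within
  · have : Tendsto (fun x : ℝ => Real.sqrt (1 - x ^ 2)) (nhds 1) (nhds 0) := by
      have hc : Continuous fun x : ℝ => Real.sqrt (1 - x ^ 2) := by fun_prop
      have := hc.tendsto 1
      simpa using this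
    exact this.mono_left nhdsWithin_le_nhds
  · filter_upwards [self_mem_nhdsWithin] with x hx
    exact Real.sqrt_pos.2 (by nlinarith [hx.1, hx.2])

lemma log_ratio_top : Tendsto (fun ε : ℝ => Real.log ((ε + π/2) / ε))
    (nhdsWithin 0 (Ioi 0)) atTop := by
  have h : ∀ᶠ ε : ℝ in nhdsWithin 0 (Ioi 0),
      Real.log (ε + π/2) + -Real.log ε = Real.log ((ε + π/2) / ε) := by
    filter_upwards [self_mem_nhdsWithin] with ε hε
    have hε' : (0:ℝ) < ε := hε
    rw [Real.log_div (by positivity) (ne_of_gt hε')]; ring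
  apply Tendsto.congr' h
  apply Filter.Tendsto.add_atTop
  · have : Tendsto (fun ε : ℝ => ε + π/2) (nhdsWithin 0 (Ioi 0)) (nhds (π/2)) := by
      have h2 : Continuous (fun e : ℝ => e + π/2) := by fun_prop
      have h3 := h2.tendsto (0:ℝ)
      simp only [zero_add] at h3
      exact h3.mono_left nhdsWithin_le_nhds
    exact ((Real.continuousAt_log (by positivity)).tendsto.comp this)
  · exact tendsto_neg_atBot_atTop.comp Real.tendsto_log_nhdsGT_zero

lemma K_top : Tendsto ellipticK (nhdsWithin 1 (Ioo 0 1)) atTop := by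
  apply tendsto_atTop_mono' _ _ (log_ratio_top.comp sqrt_to_zero)
  filter_upwards [self_mem_nhdsWithin] with x hx
  exact K_lb (by nlinarith [hx.1, hx.2])

lemma g_top : Tendsto gfun (nhdsWithin 1 (Ioo 0 1)) atTop := by
  have hK : Tendsto (fun x => (ellipticK x - π/2) / (π/2)) (nhdsWithin 1 (Ioo 0 1)) atTop := by
    apply Tendsto.atTop_div_const (by positivity)
    exact tendsto_atTop_add_const_right _ _ K_top
  apply tendsto_atTop_mono' _ _ hK
  filter_upwards [self_mem_nhdsWithin] with x hx
  have hx2 : x ^ 2 < 1 := by nlinarith [hx.1, hx.2]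
  have h1 : 0 ≤ ellipticK x - ellipticE x := KE_nonneg hx2
  have h2 : 0 < ellipticE x := E_pos hx2.le
  exact div_le_div₀ h1 (by linarith [E_le (x := x)]) h2 E_le

lemma g_zero : Tendsto gfun (nhdsWithin 0 (Ioo 0 1)) (nhds 0) := by
  have hb : Tendsto (fun x : ℝ => π/2 * (x ^ 2 / Real.sqrt (1 - x ^ 2)))
      (nhdsWithin 0 (Ioo 0 1)) (nhds 0) := by
    have hc : ContinuousAt (fun x : ℝ => π/2 * (x ^ 2 / Real.sqrt (1 - x ^ 2))) 0 := by
      apply ContinuousAt.mul continuousAt_const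
      apply ContinuousAt.div (by fun_prop) (by fun_prop)
      norm_num
    have := hc.tendsto
    norm_num at this
    exact this.mono_left nhdsWithin_le_nhds
  apply squeeze_zero' _ _ hb
  · filter_upwards [self_mem_nhdsWithin] with x hx
    have hx2 : x ^ 2 < 1 := by nlinarith [hx.1, hx.2]
    exact div_nonneg (KE_nonneg hx2) (E_pos hx2.le).le
  · filter_upwards [self_mem_nhdsWithin] with x hx
    have hx2 : x ^ 2 < 1 := by nlinarith [hx.1, hx.2]
    calc gfun x ≤ ellipticK x - ellipticE x :=
          div_le_self (KE_nonneg hx2) (E_ge_one hx2.le)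
      _ ≤ _ := KE_ub hx.1.le hx2

lemma g_cont : ContinuousOn gfun (Ioo (-1:ℝ) 1) := by
  apply ContinuousOn.div (contK.sub contE.continuousOn) contE.continuousOn
  intro x hx
  exact (E_pos (by nlinarith [hx.1, hx.2])).ne'

lemma cos_mem {γ : ℝ} (hγ : γ ∈ Ioo 0 π) : Real.cos (γ/2) ∈ Ioo (0:ℝ) 1 := by
  constructor
  · exact Real.cos_pos_of_mem_Ioo ⟨by linarith [hγ.1, Real.pi_pos], by linarith [hγ.2]⟩
  · have h := Real.strictAntiOn_cos (left_mem_Icc.2 Real.pi_pos.le)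
      (show γ/2 ∈ Icc (0:ℝ) π from ⟨by linarith [hγ.1], by linarith [hγ.2, Real.pi_pos]⟩)
      (by linarith [hγ.1])
    simpa using h

lemma cos_tendsto_one : Tendsto (fun γ : ℝ => Real.cos (γ/2))
    (nhdsWithin 0 (Ioi 0)) (nhdsWithin 1 (Ioo 0 1)) := by
  apply tendsto_nhdsWithin_of_tendsto_nhds_of_eventually_within
  · have hc : Continuous (fun γ : ℝ => Real.cos (γ/2)) := by fun_prop
    have := hc.tendsto 0
    norm_num at this
    exact this.mono_left nhdsWithin_le_nhds
  · filter_upwards [Ioo_mem_nhdsGT_of_mem ⟨le_rfl, Real.pi_pos⟩] with γ hγ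
    exact cos_mem hγ

lemma cos_tendsto_zero : Tendsto (fun γ : ℝ => Real.cos (γ/2))
    (nhdsWithin π (Iio π)) (nhdsWithin 0 (Ioo 0 1)) := by
  apply tendsto_nhdsWithin_of_tendsto_nhds_of_eventually_within
  · have hc : Continuous (fun γ : ℝ => Real.cos (γ/2)) := by fun_prop
    have := hc.tendsto π
    norm_num [Real.cos_pi_div_two] at this
    exact this.mono_left nhdsWithin_le_nhds
  · filter_upwards [Ioo_mem_nhdsLT_of_mem ⟨Real.pi_pos, le_rfl⟩] with γ hγ
    exact cos_mem hγ
end EllAux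

open EllAux

/-- The ratio `K₊(γ)/K₋(γ) = (K(cos(γ/2)) - E(cos(γ/2)))/E(cos(γ/2))` is strictly
decreasing on `(0,π)`, tends to `+∞` at `0⁻`, tends to `0` at `π⁻`, and hence attains
every positive value exactly once. -/
theorem ratio_Kplus_Kminus (ratio : ℝ → ℝ)
    (hratio : ∀ γ : ℝ, ratio γ =
      (ellipticK (Real.cos (γ/2)) - ellipticE (Real.cos (γ/2)))
        / ellipticE (Real.cos (γ/2))) :
    StrictAntiOn ratio (Set.Ioo 0 Real.pi) ∧
    Tendsto ratio (nhdsWithin 0 (Set.Ioi 0)) atTop ∧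
    Tendsto ratio (nhdsWithin Real.pi (Set.Iio Real.pi)) (nhds 0) ∧
    ∀ ρ : ℝ, 0 < ρ → ∃! γ : ℝ, γ ∈ Set.Ioo 0 Real.pi ∧ ratio γ = ρ := by
  have hratio' : ∀ γ : ℝ, ratio γ = gfun (Real.cos (γ/2)) := hratio
  have h1 : StrictAntiOn ratio (Set.Ioo 0 Real.pi) := by
    intro a ha b hb hab
    rw [hratio' a, hratio' b]
    have hca := cos_mem ha
    have hcb := cos_mem hb
    have hlt : Real.cos (b/2) < Real.cos (a/2) :=
      Real.strictAntiOn_cos ⟨by linarith [ha.1], by linarith [ha.2, Real.pi_pos]⟩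
        ⟨by linarith [hb.1], by linarith [hb.2, Real.pi_pos]⟩ (by linarith)
    exact g_strictMono ⟨hcb.1.le, hcb.2⟩ ⟨hca.1.le, hca.2⟩ hlt
  have h2 : Tendsto ratio (nhdsWithin 0 (Set.Ioi 0)) atTop :=
    (g_top.comp cos_tendsto_one).congr (fun γ => (hratio' γ).symm)
  have h3 : Tendsto ratio (nhdsWithin Real.pi (Set.Iio Real.pi)) (nhds 0) :=
    (g_zero.comp cos_tendsto_zero).congr (fun γ => (hratio' γ).symm)
  refine ⟨h1, h2, h3, ?_⟩
  intro ρ hρ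
  -- find a with ratio a > ρ
  have ha' : ∀ᶠ γ in nhdsWithin 0 (Set.Ioi 0), ρ < ratio γ ∧ γ ∈ Set.Ioo 0 π :=
    (h2.eventually_gt_atTop ρ).and
      (eventually_of_mem (Ioo_mem_nhdsGT_of_mem ⟨le_rfl, Real.pi_pos⟩) (fun _ h => h))
  obtain ⟨a, hra, haI⟩ := ha'.exists
  have hb' : ∀ᶠ γ in nhdsWithin π (Set.Iio π), ratio γ < ρ ∧ γ ∈ Set.Ioo a π := by
    refine (h3.eventually (eventually_lt_nhds hρ)).and
      (eventually_of_mem (Ioo_mem_nhdsLT_of_mem ⟨haI.2, le_rfl⟩) (fun _ h => h))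
  obtain ⟨b, hrb, hbI⟩ := hb'.exists
  have hbmem : b ∈ Set.Ioo (0:ℝ) π := ⟨lt_trans haI.1 hbI.1, hbI.2⟩
  have hcont : ContinuousOn ratio (Set.Icc a b) := by
    have : ContinuousOn (fun γ : ℝ => gfun (Real.cos (γ/2))) (Set.Icc a b) := by
      apply g_cont.comp (Continuous.continuousOn (by fun_prop))
      intro γ hγ
      have hm : γ ∈ Set.Ioo (0:ℝ) π := ⟨lt_of_lt_of_le haI.1 hγ.1, lt_of_le_of_lt hγ.2 hbI.2⟩
      have := cos_mem hm
      exact ⟨by linarith [this.1], this.2⟩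
    exact this.congr (fun γ _ => hratio' γ)
  have hsub := intermediate_value_Ioo' (le_of_lt hbI.1) hcont
  have hρmem : ρ ∈ Set.Ioo (ratio b) (ratio a) := ⟨hrb, hra⟩
  obtain ⟨γ, hγab, hγρ⟩ := hsub hρmem
  have hγmem : γ ∈ Set.Ioo (0:ℝ) π := ⟨lt_trans haI.1 hγab.1, lt_trans hγab.2 hbI.2⟩
  refine ⟨γ, ⟨hγmem, hγρ⟩, ?_⟩
  intro y hy
  exact h1.injOn hy.1 hγmem (by rw [hy.2, hγρ])
end
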